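/- Let R be an associative unital ring (not necessarily commutative), let Q be a countably generated projective right R-module, and let I = Tr_R(Q) be its trace ideal. If P₁ and P₂ are countably generated projective right R-modules such that P₁/P₁I and P₂/P₂I are isomorphic as R-modules, then Q^{(ω)} ⊕ P₁ ≅ Q^{(ω)} ⊕ P₂, where Q^{(ω)} denotes the direct sum of countably infinitely many copies of Q. -/

import Mathlib

open scoped DirectSum

universe u

/-- For a two-sided ideal `I` of `R` and a module `P`, the submodule `PI`
(written for left modules as the span of all `a • p` with `a ∈ I`). -/
def idealSMulSubmodule {R : Type u} [Ring R] (I : Ideal R) (P : Type u)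
    [AddCommGroup P] [Module R P] : Submodule R P :=
  Submodule.span R {x : P | ∃ a ∈ I, ∃ p : P, x = a • p}

namespace Stmt0Aux
open LinearMap Submodule

variable {R : Type u} [Ring R]
variable {Q : Type u} [AddCommGroup Q] [Module R Q]
variable {M M' : Type u} [AddCommGroup M] [Module R M] [AddCommGroup M'] [Module R M']

/-- Decomposition along a split surjection. -/
noncomputable def splitEquiv {M N : Type u} [AddCommGroup M] [Module R M]
    [AddCommGroup N] [Module R N]
    (π : M →ₗ[R] N) (σ : N →ₗ[R] M) (h : ∀ n, π (σ n) = n) :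
    M ≃ₗ[R] N × (LinearMap.ker π) where
  toFun x := (π x, ⟨x - σ (π x), by simp [LinearMap.mem_ker, h]⟩)
  map_add' x y := by ext <;> simp <;> abel
  map_smul' r x := by ext <;> simp [smul_sub]
  invFun p := σ p.1 + p.2.1
  left_inv x := by simp
  right_inv p := by
    have hk : π p.2.1 = 0 := p.2.2
    ext <;> simp [hk, h]

theorem map_mem_iSup_range (w : M →ₗ[R] M') {t : M}
    (ht : t ∈ ⨆ u : Q →ₗ[R] M, LinearMap.range u) :
    w t ∈ ⨆ u : Q →ₗ[R] M', LinearMap.range u := by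
  have : (⨆ u : Q →ₗ[R] M, LinearMap.range u) ≤
      Submodule.comap w (⨆ u : Q →ₗ[R] M', LinearMap.range u) := by
    refine iSup_le fun u => ?_
    rintro x ⟨q, rfl⟩
    exact Submodule.mem_comap.2 (le_iSup (fun u : Q →ₗ[R] M' => LinearMap.range u)
      (w ∘ₗ u) ⟨q, rfl⟩)
  exact this ht

theorem ideal_smul_le_iSup_range (I : Ideal R)
    (hI : I = ⨆ f : Q →ₗ[R] R, LinearMap.range f) :
    idealSMulSubmodule I M ≤ ⨆ u : Q →ₗ[R] M, LinearMap.range u := by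
  rw [idealSMulSubmodule, Submodule.span_le]
  rintro x ⟨a, haI, p, rfl⟩
  have ha : a ∈ ⨆ f : Q →ₗ[R] R, LinearMap.range f := by rw [← hI]; exact haI
  have := map_mem_iSup_range (Q := Q) (LinearMap.toSpanSingleton R M p) ha
  simpa [LinearMap.toSpanSingleton_apply] using this

theorem directSum_apply_mem_iSup_range (v : (⨁ _ : ℕ, Q) →ₗ[R] M) (x : ⨁ _ : ℕ, Q) :
    v x ∈ ⨆ u : Q →ₗ[R] M, LinearMap.range u := by
  induction x using DirectSum.induction_on with
  | zero => simp
  | of i q =>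
    have : v (DirectSum.of (fun _ : ℕ => Q) i q) =
        (v ∘ₗ DirectSum.lof R ℕ (fun _ => Q) i) q := rfl
    rw [this]
    exact le_iSup (fun u : Q →ₗ[R] M => LinearMap.range u) _ ⟨q, rfl⟩
  | add x y hx hy => rw [map_add]; exact Submodule.add_mem _ hx hy

theorem iSup_range_lof_top :
    ⨆ n : ℕ, LinearMap.range (DirectSum.lof R ℕ (fun _ => Q) n) = ⊤ := by
  rw [eq_top_iff]
  intro x _
  induction x using DirectSum.induction_on with
  | zero => simp
  | of i q =>
    exact le_iSup (fun n : ℕ => LinearMap.range (DirectSum.lof R ℕ (fun _ => Q) n)) i ⟨q, rfl⟩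
  | add x y hx hy =>
    exact Submodule.add_mem _ (hx Submodule.mem_top) (hy Submodule.mem_top)

set_option maxHeartbeats 1000000 in
theorem range_toModule (v : ℕ → (Q →ₗ[R] M)) :
    LinearMap.range (DirectSum.toModule R ℕ M v) = ⨆ n : ℕ, LinearMap.range (v n) := by
  refine le_antisymm ?_ (iSup_le fun n => ?_)
  · rintro _ ⟨x, rfl⟩
    induction x using DirectSum.induction_on with
    | zero => simp
    | of i q =>
      have h0 : DirectSum.of (fun _ : ℕ => Q) i q = DirectSum.lof R ℕ (fun _ => Q) i q := rfl
      rw [h0, DirectSum.toModule_lof]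
      exact le_iSup (fun n : ℕ => LinearMap.range (v n)) i ⟨q, rfl⟩
    | add x y hx hy => rw [map_add]; exact Submodule.add_mem _ hx hy
  · rintro _ ⟨q, rfl⟩
    exact ⟨DirectSum.lof R ℕ (fun _ => Q) n q, by simp [DirectSum.toModule_lof]⟩

theorem exists_seq_cover (G : Set M) (hGc : G.Countable)
    (hsub : ∀ x ∈ G, x ∈ ⨆ u : Q →ₗ[R] M, LinearMap.range u) :
    ∃ v : ℕ → (Q →ₗ[R] M), ∀ x ∈ G, x ∈ ⨆ n : ℕ, LinearMap.range (v n) := by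
  classical
  have hch : ∀ x ∈ G, ∃ c : (Q →ₗ[R] M) →₀ M,
      (∀ u, c u ∈ LinearMap.range u) ∧ (c.sum fun _ m => m) = x := by
    intro x hx
    exact (Submodule.mem_iSup_iff_exists_finsupp _ _).1 (hsub x hx)
  choose c hc1 hc2 using hch
  set U : Set (Q →ₗ[R] M) :=
    (⋃ (x : M) (hx : x ∈ G), (↑(c x hx).support : Set (Q →ₗ[R] M))) ∪ {0} with hU
  have hUc : U.Countable := by
    refine Set.Countable.union ?_ (Set.countable_singleton _)
    exact Set.Countable.biUnion hGc fun x hx => (Finset.countable_toSet _)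
  have hUne : U.Nonempty := ⟨0, Or.inr rfl⟩
  obtain ⟨e, he⟩ := hUc.exists_eq_range hUne
  refine ⟨e, fun x hx => ?_⟩
  rw [← hc2 x hx]
  refine Submodule.sum_mem _ fun u hu => ?_
  have huU : u ∈ U := Or.inl (Set.mem_iUnion.2 ⟨x, Set.mem_iUnion.2 ⟨hx, hu⟩⟩)
  rw [he] at huU
  obtain ⟨n, hn⟩ := huU
  have : c x hx u ∈ LinearMap.range (e n) := by rw [hn]; exact hc1 x hx u
  exact le_iSup (fun n : ℕ => LinearMap.range (e n)) n this

variable (R M M')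

/-- `(α →₀ M × M') ≃ (α →₀ M) × (α →₀ M')`. -/
noncomputable def finsuppProdSplit (α : Type) :
    (α →₀ M × M') ≃ₗ[R] (α →₀ M) × (α →₀ M') :=
  LinearEquiv.ofLinear
    ((Finsupp.mapRange.linearMap (LinearMap.fst R M M')).prod
      (Finsupp.mapRange.linearMap (LinearMap.snd R M M')))
    ((Finsupp.mapRange.linearMap (LinearMap.inl R M M')).coprod
      (Finsupp.mapRange.linearMap (LinearMap.inr R M M')))
    (by ext a m <;> simp)
    (by
      apply Finsupp.lhom_ext
      intro a b
      simp [← Finsupp.single_add])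

noncomputable def shiftEquiv : (ℕ →₀ M) ≃ₗ[R] M × (ℕ →₀ M) :=
  ((Finsupp.domLCongr ((Equiv.sumComm PUnit.{1} ℕ).trans Equiv.natSumPUnitEquivNat)).symm.trans
    (Finsupp.sumFinsuppLEquivProdFinsupp (M := M) R)).trans
    (LinearEquiv.prodCongr (Finsupp.LinearEquiv.finsuppUnique R M PUnit.{1})
      (LinearEquiv.refl R (ℕ →₀ M)))

noncomputable def doubleEquiv : ((ℕ →₀ M) × (ℕ →₀ M)) ≃ₗ[R] (ℕ →₀ M) :=
  (Finsupp.sumFinsuppLEquivProdFinsupp (M := M) R).symm.trans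
    (Finsupp.domLCongr Equiv.natSumNatEquivNat)

noncomputable def flattenEquiv : (ℕ →₀ (ℕ →₀ M)) ≃ₗ[R] (ℕ →₀ M) :=
  (Finsupp.finsuppProdLEquiv (M := M) R).symm.trans
    (Finsupp.domLCongr (Denumerable.eqv (ℕ × ℕ)))

end Stmt0Aux

open Stmt0Aux LinearMap Submodule in
theorem stmt0 (R : Type u) [Ring R]
    (Q : Type u) [AddCommGroup Q] [Module R Q] [Module.Projective R Q]
    (hQcg : ∃ S : Set Q, S.Countable ∧ Submodule.span R S = ⊤)
    (I : Ideal R) (hI : I = ⨆ f : Q →ₗ[R] R, LinearMap.range f)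
    (P₁ : Type u) [AddCommGroup P₁] [Module R P₁] [Module.Projective R P₁]
    (hP₁ : ∃ S : Set P₁, S.Countable ∧ Submodule.span R S = ⊤)
    (P₂ : Type u) [AddCommGroup P₂] [Module R P₂] [Module.Projective R P₂]
    (hP₂ : ∃ S : Set P₂, S.Countable ∧ Submodule.span R S = ⊤)
    (hiso : Nonempty ((P₁ ⧸ idealSMulSubmodule I P₁) ≃ₗ[R] (P₂ ⧸ idealSMulSubmodule I P₂))) :
    Nonempty (((⨁ _ : ℕ, Q) × P₁) ≃ₗ[R] ((⨁ _ : ℕ, Q) × P₂)) := by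
  classical
  obtain ⟨SQ, hSQc, hSQs⟩ := hQcg
  obtain ⟨S1, hS1c, hS1s⟩ := hP₁
  obtain ⟨S2, hS2c, hS2s⟩ := hP₂
  obtain ⟨ψ⟩ := hiso
  haveI : Module.Projective R (⨁ _ : ℕ, Q) :=
    inferInstanceAs (Module.Projective R (Π₀ _ : ℕ, Q))
  set N₁ := idealSMulSubmodule I P₁ with hN₁
  set N₂ := idealSMulSubmodule I P₂ with hN₂
  -- lift the isomorphism and its inverse
  obtain ⟨f, hf⟩ := Module.projective_lifting_property N₂.mkQ
    (ψ.toLinearMap ∘ₗ N₁.mkQ) (Submodule.mkQ_surjective _)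
  obtain ⟨g, hg⟩ := Module.projective_lifting_property N₁.mkQ
    (ψ.symm.toLinearMap ∘ₗ N₂.mkQ) (Submodule.mkQ_surjective _)
  have hfap : ∀ p : P₁, N₂.mkQ (f p) = ψ (N₁.mkQ p) := fun p => by
    rw [← LinearMap.comp_apply, hf]; rfl
  have hgap : ∀ p : P₂, N₁.mkQ (g p) = ψ.symm (N₂.mkQ p) := fun p => by
    rw [← LinearMap.comp_apply, hg]; rfl
  have hgf : ∀ p : P₁, p - g (f p) ∈ N₁ := by
    intro p
    have h0 : N₁.mkQ (p - g (f p)) = 0 := by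
      rw [map_sub, hgap, hfap, LinearEquiv.symm_apply_apply, sub_self]
    rw [← Submodule.ker_mkQ N₁]
    exact h0
  have hfg : ∀ p : P₂, p - f (g p) ∈ N₂ := by
    intro p
    have h0 : N₂.mkQ (p - f (g p)) = 0 := by
      rw [map_sub, hfap, hgap, LinearEquiv.apply_symm_apply, sub_self]
    rw [← Submodule.ker_mkQ N₂]
    exact h0
  -- a map h : C → P₂ whose range contains (1 - f g)(P₂)
  have hGsub : ∀ x ∈ (fun p : P₂ => p - f (g p)) '' S2,
      x ∈ ⨆ u : Q →ₗ[R] P₂, LinearMap.range u := by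
    rintro x ⟨p, _, rfl⟩
    exact ideal_smul_le_iSup_range I hI (hfg p)
  obtain ⟨v, hv⟩ := exists_seq_cover _ (hS2c.image _) hGsub
  set h : (⨁ _ : ℕ, Q) →ₗ[R] P₂ := DirectSum.toModule R ℕ P₂ v with hh
  have hrangeh : ∀ p : P₂, p - f (g p) ∈ LinearMap.range h := by
    intro p
    rw [hh, range_toModule]
    have hcomap : (⊤ : Submodule R P₂) ≤
        Submodule.comap (LinearMap.id - f ∘ₗ g) (⨆ n : ℕ, LinearMap.range (v n)) := by
      rw [← hS2s, Submodule.span_le]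
      intro s hs
      have : s - f (g s) ∈ ⨆ n : ℕ, LinearMap.range (v n) := hv _ ⟨s, hs, rfl⟩
      simpa using this
    simpa using hcomap (Submodule.mem_top : p ∈ (⊤ : Submodule R P₂))
  -- the surjection π : C × P₁ → P₂ and its splitting
  set π : ((⨁ _ : ℕ, Q) × P₁) →ₗ[R] P₂ := LinearMap.coprod h f with hπ
  have hπsurj : Function.Surjective π := by
    intro p
    obtain ⟨x, hx⟩ := hrangeh p
    refine ⟨(x, g p), ?_⟩
    show h x + f (g p) = p
    rw [hx]; abel
  obtain ⟨σ, hσ⟩ := Module.projective_lifting_property π LinearMap.id hπsurj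
  have hπσ : ∀ p, π (σ p) = p := fun p => by rw [← LinearMap.comp_apply, hσ]; rfl
  set A := LinearMap.ker π with hA
  let e₁ : ((⨁ _ : ℕ, Q) × P₁) ≃ₗ[R] P₂ × A := splitEquiv π σ hπσ
  -- the projection ρ onto A
  set ρ : ((⨁ _ : ℕ, Q) × P₁) →ₗ[R] ((⨁ _ : ℕ, Q) × P₁) := LinearMap.id - σ ∘ₗ π with hρ
  have hρfix : ∀ k ∈ A, ρ k = k := by
    intro k hk
    have : π k = 0 := hk
    simp [hρ, this]
  have hρrange : LinearMap.range ρ = A := by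
    apply le_antisymm
    · rintro _ ⟨m, rfl⟩
      show π _ = 0
      simp [hρ, hπσ]
    · intro k hk
      exact ⟨k, hρfix k hk⟩
  -- every element of A is in the union of ranges of maps from Q
  have hKT : ∀ k ∈ A, k ∈ ⨆ u : Q →ₗ[R] ((⨁ _ : ℕ, Q) × P₁), LinearMap.range u := by
    rintro ⟨x, p⟩ hk
    have hk0 : h x + f p = 0 := hk
    have hx0 : ((x, (0 : P₁)) : (⨁ _ : ℕ, Q) × P₁) ∈
        ⨆ u : Q →ₗ[R] ((⨁ _ : ℕ, Q) × P₁), LinearMap.range u :=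
      directSum_apply_mem_iSup_range (LinearMap.inl R _ P₁) x
    have hpr : (((0 : ⨁ _ : ℕ, Q), p - g (f p)) : (⨁ _ : ℕ, Q) × P₁) ∈
        ⨆ u : Q →ₗ[R] ((⨁ _ : ℕ, Q) × P₁), LinearMap.range u :=
      by simpa using map_mem_iSup_range (LinearMap.inr R (⨁ _ : ℕ, Q) P₁) (ideal_smul_le_iSup_range I hI (hgf p))
    have hfp : f p = -(h x) := by
      rw [eq_neg_iff_add_eq_zero, add_comm]; exact hk0
    have hgf2 : (((0 : ⨁ _ : ℕ, Q), g (f p)) : (⨁ _ : ℕ, Q) × P₁) ∈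
        ⨆ u : Q →ₗ[R] ((⨁ _ : ℕ, Q) × P₁), LinearMap.range u := by
      have hmem : (((0 : ⨁ _ : ℕ, Q), g (h x)) : (⨁ _ : ℕ, Q) × P₁) ∈
          ⨆ u : Q →ₗ[R] ((⨁ _ : ℕ, Q) × P₁), LinearMap.range u := by
        have hmem0 := directSum_apply_mem_iSup_range
          ((LinearMap.inr R (⨁ _ : ℕ, Q) P₁) ∘ₗ g ∘ₗ h) x
        simpa using hmem0
      have heq : (((0 : ⨁ _ : ℕ, Q), g (f p)) : (⨁ _ : ℕ, Q) × P₁) =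
          -(((0 : ⨁ _ : ℕ, Q), g (h x)) : (⨁ _ : ℕ, Q) × P₁) := by
        rw [hfp, map_neg, Prod.neg_mk, neg_zero]
      rw [heq]
      exact neg_mem hmem
    have hsplit : ((x, p) : (⨁ _ : ℕ, Q) × P₁) =
        (x, 0) + (0, p - g (f p)) + (0, g (f p)) := by
      ext <;> simp
    rw [hsplit]
    exact add_mem (add_mem hx0 hpr) hgf2
  -- a countable generating set for C × P₁, moved into A via ρ
  set SC : Set (⨁ _ : ℕ, Q) := ⋃ n : ℕ, (DirectSum.lof R ℕ (fun _ => Q) n '' SQ) with hSC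
  have hSCc : SC.Countable := Set.countable_iUnion fun n => hSQc.image _
  have hSCs : Submodule.span R SC = ⊤ := by
    rw [hSC, Submodule.span_iUnion]
    have : ∀ n : ℕ, Submodule.span R (DirectSum.lof R ℕ (fun _ => Q) n '' SQ) =
        LinearMap.range (DirectSum.lof R ℕ (fun _ => Q) n) := by
      intro n
      rw [Submodule.span_image, hSQs, Submodule.map_top]
    simp_rw [this]
    exact iSup_range_lof_top
  set G₀ : Set ((⨁ _ : ℕ, Q) × P₁) :=
    (LinearMap.inl R _ P₁ '' SC) ∪ (LinearMap.inr R _ P₁ '' S1) with hG₀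
  have hG₀c : G₀.Countable := (hSCc.image _).union (hS1c.image _)
  have hG₀s : Submodule.span R G₀ = ⊤ := by
    rw [hG₀, Submodule.span_union, Submodule.span_image, Submodule.span_image,
      hSCs, hS1s, Submodule.map_top, Submodule.map_top]
    exact LinearMap.sup_range_inl_inr
  set G₁ : Set ((⨁ _ : ℕ, Q) × P₁) := ρ '' G₀ with hG₁
  have hG₁c : G₁.Countable := hG₀c.image _
  have hG₁s : Submodule.span R G₁ = A := by
    rw [hG₁, Submodule.span_image, hG₀s, Submodule.map_top, hρrange]
  have hG₁A : ∀ x ∈ G₁, x ∈ A := by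
    intro x hx
    have : x ∈ Submodule.span R G₁ := Submodule.subset_span hx
    rwa [hG₁s] at this
  obtain ⟨v', hv'⟩ := exists_seq_cover G₁ hG₁c (fun x hx => hKT x (hG₁A x hx))
  set H : (⨁ _ : ℕ, Q) →ₗ[R] ((⨁ _ : ℕ, Q) × P₁) :=
    DirectSum.toModule R ℕ _ (fun n => ρ ∘ₗ v' n) with hH
  have hHrange : LinearMap.range H = A := by
    rw [hH, range_toModule]
    apply le_antisymm
    · refine iSup_le fun n => ?_
      rw [← hρrange]
      exact LinearMap.range_comp_le_range (v' n) ρ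
    · rw [← hG₁s, Submodule.span_le]
      intro x hx
      have h1 : x ∈ ⨆ n : ℕ, LinearMap.range (v' n) := hv' x hx
      have h2 : ρ x = x := hρfix x (hG₁A x hx)
      have h3 : Submodule.map ρ (⨆ n : ℕ, LinearMap.range (v' n)) =
          ⨆ n : ℕ, LinearMap.range (ρ ∘ₗ v' n) := by
        rw [Submodule.map_iSup]
        exact iSup_congr fun n => (LinearMap.range_comp (v' n) ρ).symm
      rw [← h2, ← h3]
      exact Submodule.mem_map_of_mem h1
  set H' : (⨁ _ : ℕ, Q) →ₗ[R] A :=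
    H.codRestrict A (fun x => by rw [← hHrange]; exact ⟨x, rfl⟩) with hH'
  have hH'surj : Function.Surjective H' := by
    rintro ⟨a, ha⟩
    rw [← hHrange] at ha
    obtain ⟨x, hx⟩ := ha
    exact ⟨x, Subtype.ext hx⟩
  haveI : Module.Projective R A := by
    refine Module.Projective.of_split A.subtype
      (LinearMap.codRestrict A ρ (fun x => by rw [← hρrange]; exact ⟨x, rfl⟩)) ?_
    apply LinearMap.ext
    rintro ⟨a, ha⟩
    exact Subtype.ext (hρfix a ha)
  obtain ⟨τ, hτ⟩ := Module.projective_lifting_property H' LinearMap.id hH'surj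
  have hτap : ∀ a, H' (τ a) = a := fun a => by rw [← LinearMap.comp_apply, hτ]; rfl
  let e₂ : (⨁ _ : ℕ, Q) ≃ₗ[R] A × (LinearMap.ker H') := splitEquiv H' τ hτap
  -- the Eilenberg swindle
  let cQ : (⨁ _ : ℕ, Q) ≃ₗ[R] (ℕ →₀ Q) := (finsuppLEquivDirectSum R Q ℕ).symm
  let cFC : (⨁ _ : ℕ, Q) ≃ₗ[R] (ℕ →₀ (⨁ _ : ℕ, Q)) :=
    cQ.trans ((flattenEquiv R Q).symm.trans (Finsupp.mapRange.linearEquiv cQ.symm))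
  let d : (⨁ _ : ℕ, Q) ≃ₗ[R] (ℕ →₀ A) × (ℕ →₀ (LinearMap.ker H')) :=
    cFC.trans ((Finsupp.mapRange.linearEquiv e₂).trans
      (finsuppProdSplit R A (LinearMap.ker H') ℕ))
  let γ : ((⨁ _ : ℕ, Q) × A) ≃ₗ[R] (⨁ _ : ℕ, Q) :=
    (d.prodCongr (LinearEquiv.refl R A)).trans <|
      (LinearEquiv.prodComm R _ _).trans <|
        ((LinearEquiv.prodAssoc R A (ℕ →₀ A) (ℕ →₀ (LinearMap.ker H'))).symm).trans <|
          (LinearEquiv.prodCongr (shiftEquiv R A).symm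
            (LinearEquiv.refl R (ℕ →₀ (LinearMap.ker H')))).trans d.symm
  let β : (((⨁ _ : ℕ, Q) × (⨁ _ : ℕ, Q))) ≃ₗ[R] (⨁ _ : ℕ, Q) :=
    (cQ.prodCongr cQ).trans ((doubleEquiv R Q).trans cQ.symm)
  let E1 : ((⨁ _ : ℕ, Q) × P₁) ≃ₗ[R] (((⨁ _ : ℕ, Q) × (⨁ _ : ℕ, Q)) × P₁) :=
    β.symm.prodCongr (LinearEquiv.refl R P₁)
  let E2 := LinearEquiv.prodAssoc R (⨁ _ : ℕ, Q) (⨁ _ : ℕ, Q) P₁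
  let E3 : ((⨁ _ : ℕ, Q) × ((⨁ _ : ℕ, Q) × P₁)) ≃ₗ[R] ((⨁ _ : ℕ, Q) × (P₂ × A)) :=
    (LinearEquiv.refl R (⨁ _ : ℕ, Q)).prodCongr e₁
  let E4 : ((⨁ _ : ℕ, Q) × (P₂ × A)) ≃ₗ[R] (((⨁ _ : ℕ, Q) × A) × P₂) :=
    ((LinearEquiv.refl R (⨁ _ : ℕ, Q)).prodCongr (LinearEquiv.prodComm R P₂ A)).trans
      (LinearEquiv.prodAssoc R (⨁ _ : ℕ, Q) A P₂).symm
  exact ⟨E1.trans (E2.trans (E3.trans (E4.trans (γ.prodCongr (LinearEquiv.refl R P₂)))))⟩
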